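/- Let n ≥ 1, let A and B be Hermitian n×n complex matrices all of whose eigenvalues lie in the open interval (−1,1), let f, g ∈ 𝔥, and let X be an arbitrary n×n complex matrix. Then for every unitarily invariant norm N on the n×n complex matrices, N(f(A)X + f(A)Xg(B) + Xg(B)) ≤ (√2/(d_A d_B)) · ( N(|AXB| + |X|) + N(|XB| + |X|) + N(|AX| + |X|) ). -/

import Mathlib

open Matrix
open scoped ComplexOrder

/-- `f(A)` for a Hermitian matrix `A`, defined via the spectral decomposition:
`f(A) = U diag(f(λ₁),…,f(λₙ)) U*`. -/
noncomputable def herFun {n : ℕ} {A : Matrix (Fin n) (Fin n) ℂ} (hA : A.IsHermitian)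
    (f : ℂ → ℂ) : Matrix (Fin n) (Fin n) ℂ :=
  (hA.eigenvectorUnitary : Matrix (Fin n) (Fin n) ℂ) *
    Matrix.diagonal (fun i => f (hA.eigenvalues i : ℂ)) *
    star (hA.eigenvectorUnitary : Matrix (Fin n) (Fin n) ℂ)

/-- `|X| = (X*X)^{1/2}`, the positive semidefinite absolute value of a matrix. -/
noncomputable def matAbs {n : ℕ} (X : Matrix (Fin n) (Fin n) ℂ) : Matrix (Fin n) (Fin n) ℂ :=
  ((Matrix.posSemidef_conjTranspose_mul_self X).1.eigenvectorUnitary : Matrix (Fin n) (Fin n) ℂ) *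
    Matrix.diagonal ((↑) ∘ (Real.sqrt ·) ∘ (Matrix.posSemidef_conjTranspose_mul_self X).1.eigenvalues) *
    (star (Matrix.posSemidef_conjTranspose_mul_self X).1.eigenvectorUnitary : Matrix (Fin n) (Fin n) ℂ)

/-- `d_A = min { 1 - |λⱼ| }`, the distance from the unit circle to the spectrum of a
Hermitian matrix `A` whose eigenvalues lie in `(-1,1)`. -/
noncomputable def dDist {n : ℕ} {A : Matrix (Fin n) (Fin n) ℂ} (hA : A.IsHermitian) : ℝ :=
  ⨅ i, (1 - |hA.eigenvalues i|)

/-- Membership in the class `𝔥`: analytic on the open unit disk, positive real part there,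
and value `1` at the origin. -/
def MemH (f : ℂ → ℂ) : Prop :=
  DifferentiableOn ℂ f (Metric.ball (0 : ℂ) 1) ∧
    (∀ z ∈ Metric.ball (0 : ℂ) 1, 0 < (f z).re) ∧ f 0 = 1

/-- A function `N` on `n × n` complex matrices is a unitarily invariant norm. -/
def IsUnitarilyInvariantNorm {m : Type*} [Fintype m] [DecidableEq m]
    (N : Matrix m m ℂ → ℝ) : Prop :=
  (∀ X, N X = 0 ↔ X = 0) ∧
    (∀ (c : ℂ) X, N (c • X) = ‖c‖ * N X) ∧
    (∀ X Y, N (X + Y) ≤ N X + N Y) ∧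
    (∀ (U V : Matrix.unitaryGroup m ℂ) (X : Matrix m m ℂ),
      N ((U : Matrix m m ℂ) * X * (V : Matrix m m ℂ)) = N X)

section Helpers

variable {n : ℕ} {N : Matrix (Fin n) (Fin n) ℂ → ℝ}

lemma N_zero (hN : IsUnitarilyInvariantNorm N) : N 0 = 0 := (hN.1 0).mpr rfl

lemma N_nonneg (hN : IsUnitarilyInvariantNorm N) (X : Matrix (Fin n) (Fin n) ℂ) : 0 ≤ N X := by
  have h := hN.2.2.1 X (-X)
  have hneg : N (-X) = N X := by
    have := hN.2.1 (-1) X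
    simpa using this
  rw [add_neg_cancel, N_zero hN, hneg] at h
  linarith

lemma N_unitary_left (hN : IsUnitarilyInvariantNorm N) (U : Matrix.unitaryGroup (Fin n) ℂ)
    (X : Matrix (Fin n) (Fin n) ℂ) : N ((U : Matrix (Fin n) (Fin n) ℂ) * X) = N X := by
  have := hN.2.2.2 U 1 X
  simpa using this

lemma N_unitary_right (hN : IsUnitarilyInvariantNorm N) (U : Matrix.unitaryGroup (Fin n) ℂ)
    (X : Matrix (Fin n) (Fin n) ℂ) : N (X * (U : Matrix (Fin n) (Fin n) ℂ)) = N X := by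
  have := hN.2.2.2 1 U X
  simpa using this

/-- Any complex number of norm at most one is the average of two unimodular numbers. -/
lemma avg_unimodular (z : ℂ) (hz : ‖z‖ ≤ 1) :
    ∃ u w : ℂ, ‖u‖ = 1 ∧ ‖w‖ = 1 ∧ z = (u + w) / 2 := by
  obtain ⟨s, hs1, hzs⟩ : ∃ s : ℂ, ‖s‖ = 1 ∧ z = (‖z‖ : ℂ) * s := by
    rcases eq_or_ne z 0 with h | h
    · exact ⟨1, by simp, by simp [h]⟩
    · refine ⟨(‖z‖ : ℂ)⁻¹ * z, ?_, ?_⟩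
      · rw [norm_mul, norm_inv, Complex.norm_real, norm_norm,
          inv_mul_cancel₀ (norm_ne_zero_iff.mpr h)]
      · rw [← mul_assoc, mul_inv_cancel₀ (by exact_mod_cast norm_ne_zero_iff.mpr h), one_mul]
  set t : ℝ := Real.sqrt (1 - ‖z‖ ^ 2) with ht
  have ht0 : 0 ≤ t := Real.sqrt_nonneg _
  have ht2 : t ^ 2 = 1 - ‖z‖ ^ 2 := Real.sq_sqrt (by nlinarith [norm_nonneg z])
  have key : ∀ c : ℝ, ‖(‖z‖ : ℂ) + (c : ℂ) * Complex.I‖ = Real.sqrt (‖z‖ ^ 2 + c ^ 2) := by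
    intro c
    rw [Complex.norm_add_mul_I]
  refine ⟨((‖z‖ : ℂ) + (t : ℂ) * Complex.I) * s, ((‖z‖ : ℂ) - (t : ℂ) * Complex.I) * s, ?_, ?_, ?_⟩
  · rw [norm_mul, hs1, mul_one, key t]
    rw [show ‖z‖ ^ 2 + t ^ 2 = 1 by rw [ht2]; ring]
    exact Real.sqrt_one
  · rw [norm_mul, hs1, mul_one, sub_eq_add_neg,
      show -((t : ℂ) * Complex.I) = ((-t : ℝ) : ℂ) * Complex.I by push_cast; ring, key (-t)]
    rw [show ‖z‖ ^ 2 + (-t) ^ 2 = 1 by rw [neg_pow, ht2]; ring]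
    exact Real.sqrt_one
  · have e : ((((‖z‖ : ℂ) + (t : ℂ) * Complex.I) * s) +
        (((‖z‖ : ℂ) - (t : ℂ) * Complex.I) * s)) / 2 = (‖z‖ : ℂ) * s := by ring
    rw [e, ← hzs]

end Helpers

section Part2
variable {n : ℕ} {N : Matrix (Fin n) (Fin n) ℂ → ℝ}

lemma diagonal_unimodular_mem {u : Fin n → ℂ} (hu : ∀ i, ‖u i‖ = 1) :
    Matrix.diagonal u ∈ Matrix.unitaryGroup (Fin n) ℂ := by
  rw [Matrix.mem_unitaryGroup_iff]
  have : star (Matrix.diagonal u) = Matrix.diagonal (star u) := Matrix.diagonal_conjTranspose u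
  rw [this, Matrix.diagonal_mul_diagonal]
  have h1 : (fun i => u i * star u i) = fun _ => (1 : ℂ) := by
    funext i
    simp only [Pi.star_apply, Complex.star_def, Complex.mul_conj]
    norm_cast
    rw [Complex.normSq_eq_norm_sq, hu i, one_pow]
  rw [h1]
  simp

lemma N_diag_mul_le (hN : IsUnitarilyInvariantNorm N) {c : ℝ} (hc : 0 ≤ c)
    {e : Fin n → ℂ} (he : ∀ i, ‖e i‖ ≤ c) (M : Matrix (Fin n) (Fin n) ℂ) :
    N (Matrix.diagonal e * M) ≤ c * N M := by
  rcases eq_or_lt_of_le hc with h0 | h0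
  · have : e = 0 := by
      funext i
      have := he i
      rw [← h0] at this
      simpa using le_antisymm this (norm_nonneg _)
    rw [this, show Matrix.diagonal (0 : Fin n → ℂ) = 0 from Matrix.diagonal_zero,
      Matrix.zero_mul, N_zero hN, ← h0, zero_mul]
  · choose u w hu hw hz using fun i => avg_unimodular (e i / c)
      (by rw [norm_div, Complex.norm_real, Real.norm_eq_abs, abs_of_pos h0,
            div_le_one h0]; exact he i)
    have he' : e = fun i => ((c : ℂ) / 2) * (u i + w i) := by
      funext i
      have h2 := hz i
      have hc' : (c : ℂ) ≠ 0 := by exact_mod_cast h0.ne'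
      field_simp at h2 ⊢
      linear_combination h2
    have hsplit : Matrix.diagonal e * M =
        ((c : ℂ) / 2) • (Matrix.diagonal u * M + Matrix.diagonal w * M) := by
      rw [he']
      have hd : (Matrix.diagonal fun i => ((c : ℂ) / 2) * (u i + w i)) =
          ((c : ℂ) / 2) • (Matrix.diagonal u + Matrix.diagonal w) := by
        ext i j
        rcases eq_or_ne i j with rfl | hij
        · simp [Matrix.diagonal_apply_eq, mul_add]
        · simp [Matrix.diagonal_apply_ne _ hij]
      rw [hd, smul_mul_assoc, add_mul]
    rw [hsplit, hN.2.1]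
    have h1 : N (Matrix.diagonal u * M) = N M :=
      N_unitary_left hN ⟨_, diagonal_unimodular_mem hu⟩ M
    have h2 : N (Matrix.diagonal w * M) = N M :=
      N_unitary_left hN ⟨_, diagonal_unimodular_mem hw⟩ M
    have h3 : N (Matrix.diagonal u * M + Matrix.diagonal w * M) ≤ 2 * N M := by
      have := hN.2.2.1 (Matrix.diagonal u * M) (Matrix.diagonal w * M)
      rw [h1, h2] at this; linarith
    have hnorm : ‖((c : ℂ) / 2)‖ = c / 2 := by
      rw [norm_div, Complex.norm_real, Real.norm_eq_abs, abs_of_pos h0]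
      simp
    rw [hnorm]
    calc c / 2 * N (Matrix.diagonal u * M + Matrix.diagonal w * M) ≤ c / 2 * (2 * N M) := by
          apply mul_le_mul_of_nonneg_left h3; linarith
      _ = c * N M := by ring

lemma N_mul_diag_le (hN : IsUnitarilyInvariantNorm N) {c : ℝ} (hc : 0 ≤ c)
    {e : Fin n → ℂ} (he : ∀ i, ‖e i‖ ≤ c) (M : Matrix (Fin n) (Fin n) ℂ) :
    N (M * Matrix.diagonal e) ≤ c * N M := by
  rcases eq_or_lt_of_le hc with h0 | h0
  · have : e = 0 := by
      funext i
      have := he i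
      rw [← h0] at this
      simpa using le_antisymm this (norm_nonneg _)
    rw [this, show Matrix.diagonal (0 : Fin n → ℂ) = 0 from Matrix.diagonal_zero,
      Matrix.mul_zero, N_zero hN, ← h0, zero_mul]
  · choose u w hu hw hz using fun i => avg_unimodular (e i / c)
      (by rw [norm_div, Complex.norm_real, Real.norm_eq_abs, abs_of_pos h0,
            div_le_one h0]; exact he i)
    have he' : e = fun i => ((c : ℂ) / 2) * (u i + w i) := by
      funext i
      have h2 := hz i
      have hc' : (c : ℂ) ≠ 0 := by exact_mod_cast h0.ne'
      field_simp at h2 ⊢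
      linear_combination h2
    have hsplit : M * Matrix.diagonal e =
        ((c : ℂ) / 2) • (M * Matrix.diagonal u + M * Matrix.diagonal w) := by
      rw [he']
      have hd : (Matrix.diagonal fun i => ((c : ℂ) / 2) * (u i + w i)) =
          ((c : ℂ) / 2) • (Matrix.diagonal u + Matrix.diagonal w) := by
        ext i j
        rcases eq_or_ne i j with rfl | hij
        · simp [Matrix.diagonal_apply_eq, mul_add]
        · simp [Matrix.diagonal_apply_ne _ hij]
      rw [hd, mul_smul_comm, mul_add]
    rw [hsplit, hN.2.1]
    have h1 : N (M * Matrix.diagonal u) = N M :=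
      N_unitary_right hN ⟨_, diagonal_unimodular_mem hu⟩ M
    have h2 : N (M * Matrix.diagonal w) = N M :=
      N_unitary_right hN ⟨_, diagonal_unimodular_mem hw⟩ M
    have h3 : N (M * Matrix.diagonal u + M * Matrix.diagonal w) ≤ 2 * N M := by
      have := hN.2.2.1 (M * Matrix.diagonal u) (M * Matrix.diagonal w)
      rw [h1, h2] at this; linarith
    have hnorm : ‖((c : ℂ) / 2)‖ = c / 2 := by
      rw [norm_div, Complex.norm_real, Real.norm_eq_abs, abs_of_pos h0]
      simp
    rw [hnorm]
    calc c / 2 * N (M * Matrix.diagonal u + M * Matrix.diagonal w) ≤ c / 2 * (2 * N M) := by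
          apply mul_le_mul_of_nonneg_left h3; linarith
      _ = c * N M := by ring

lemma N_conj_diag_mul_le (hN : IsUnitarilyInvariantNorm N)
    (U : Matrix.unitaryGroup (Fin n) ℂ) {c : ℝ} (hc : 0 ≤ c)
    {e : Fin n → ℂ} (he : ∀ i, ‖e i‖ ≤ c) (M : Matrix (Fin n) (Fin n) ℂ) :
    N ((U : Matrix (Fin n) (Fin n) ℂ) * Matrix.diagonal e *
        star (U : Matrix (Fin n) (Fin n) ℂ) * M) ≤ c * N M := by
  have hstar : star (U : Matrix (Fin n) (Fin n) ℂ) ∈ Matrix.unitaryGroup (Fin n) ℂ :=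
    Unitary.star_mem U.2
  have e1 : (U : Matrix (Fin n) (Fin n) ℂ) * Matrix.diagonal e *
      star (U : Matrix (Fin n) (Fin n) ℂ) * M =
      (U : Matrix (Fin n) (Fin n) ℂ) *
        (Matrix.diagonal e * (star (U : Matrix (Fin n) (Fin n) ℂ) * M)) := by
    simp only [Matrix.mul_assoc]
  rw [e1, N_unitary_left hN U]
  calc N (Matrix.diagonal e * (star (U : Matrix (Fin n) (Fin n) ℂ) * M)) ≤
      c * N (star (U : Matrix (Fin n) (Fin n) ℂ) * M) := N_diag_mul_le hN hc he _
    _ = c * N M := by rw [N_unitary_left hN ⟨_, hstar⟩ M]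

lemma N_mul_conj_diag_le (hN : IsUnitarilyInvariantNorm N)
    (U : Matrix.unitaryGroup (Fin n) ℂ) {c : ℝ} (hc : 0 ≤ c)
    {e : Fin n → ℂ} (he : ∀ i, ‖e i‖ ≤ c) (M : Matrix (Fin n) (Fin n) ℂ) :
    N (M * ((U : Matrix (Fin n) (Fin n) ℂ) * Matrix.diagonal e *
        star (U : Matrix (Fin n) (Fin n) ℂ))) ≤ c * N M := by
  have hstar : star (U : Matrix (Fin n) (Fin n) ℂ) ∈ Matrix.unitaryGroup (Fin n) ℂ :=
    Unitary.star_mem U.2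
  have e1 : M * ((U : Matrix (Fin n) (Fin n) ℂ) * Matrix.diagonal e *
      star (U : Matrix (Fin n) (Fin n) ℂ)) =
      ((M * (U : Matrix (Fin n) (Fin n) ℂ)) * Matrix.diagonal e) *
        star (U : Matrix (Fin n) (Fin n) ℂ) := by
    simp only [Matrix.mul_assoc]
  rw [e1, N_unitary_right hN ⟨_, hstar⟩]
  calc N ((M * (U : Matrix (Fin n) (Fin n) ℂ)) * Matrix.diagonal e) ≤
      c * N (M * (U : Matrix (Fin n) (Fin n) ℂ)) := N_mul_diag_le hN hc he _
    _ = c * N M := by rw [N_unitary_right hN U M]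

end Part2

section SVD
variable {n : ℕ}

lemma exists_svd (K : Matrix (Fin n) (Fin n) ℂ) :
    ∃ (U V : Matrix.unitaryGroup (Fin n) ℂ) (d : Fin n → ℝ),
      (∀ i, 0 ≤ d i) ∧
      (∀ i, (d i) ^ 2 = (Matrix.posSemidef_conjTranspose_mul_self K).1.eigenvalues i) ∧
      K = (U : Matrix (Fin n) (Fin n) ℂ) * Matrix.diagonal (fun i => (d i : ℂ)) *
        star (V : Matrix (Fin n) (Fin n) ℂ) ∧
      matAbs K = (V : Matrix (Fin n) (Fin n) ℂ) * Matrix.diagonal (fun i => (d i : ℂ)) *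
        star (V : Matrix (Fin n) (Fin n) ℂ) := by
  classical
  have hsem := Matrix.posSemidef_conjTranspose_mul_self K
  set h1 : (Kᴴ * K).IsHermitian := hsem.1 with hh1
  set V : Matrix.unitaryGroup (Fin n) ℂ := h1.eigenvectorUnitary with hV
  set μ : Fin n → ℝ := h1.eigenvalues with hμ
  have hμ0 : ∀ i, 0 ≤ μ i := fun i => hsem.eigenvalues_nonneg i
  set d : Fin n → ℝ := fun i => Real.sqrt (μ i) with hd
  have hd0 : ∀ i, 0 ≤ d i := fun i => Real.sqrt_nonneg _
  have hd2 : ∀ i, d i ^ 2 = μ i := fun i => Real.sq_sqrt (hμ0 i)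
  have hVV : star (V : Matrix (Fin n) (Fin n) ℂ) * (V : Matrix (Fin n) (Fin n) ℂ) = 1 :=
    Unitary.coe_star_mul_self V
  have hVV' : (V : Matrix (Fin n) (Fin n) ℂ) * star (V : Matrix (Fin n) (Fin n) ℂ) = 1 :=
    Unitary.coe_mul_star_self V
  have hspec : Kᴴ * K = (V : Matrix (Fin n) (Fin n) ℂ) *
      Matrix.diagonal (fun i => (μ i : ℂ)) * star (V : Matrix (Fin n) (Fin n) ℂ) := by
    have := h1.spectral_theorem
    rw [Unitary.conjStarAlgAut_apply] at this
    exact this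
  set Y : Matrix (Fin n) (Fin n) ℂ := K * (V : Matrix (Fin n) (Fin n) ℂ) with hY
  have hYY : Yᴴ * Y = Matrix.diagonal (fun i => (μ i : ℂ)) := by
    rw [hY, Matrix.conjTranspose_mul]
    calc (V : Matrix (Fin n) (Fin n) ℂ)ᴴ * Kᴴ * (K * (V : Matrix (Fin n) (Fin n) ℂ))
        = star (V : Matrix (Fin n) (Fin n) ℂ) * (Kᴴ * K) * (V : Matrix (Fin n) (Fin n) ℂ) := by
          rw [Matrix.star_eq_conjTranspose]; simp only [Matrix.mul_assoc]
      _ = Matrix.diagonal (fun i => (μ i : ℂ)) := by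
          rw [hspec]; simp only [Matrix.mul_assoc, hVV, Matrix.mul_one]
          rw [← Matrix.mul_assoc, hVV, Matrix.one_mul]
  -- columns of Y
  set c : Fin n → EuclideanSpace ℂ (Fin n) := fun i => WithLp.toLp 2 (fun j => Y j i) with hc
  have hinner : ∀ i k, (inner ℂ (c i) (c k) : ℂ) = (Yᴴ * Y) i k := by
    intro i k
    simp only [PiLp.inner_apply, RCLike.inner_apply, Matrix.mul_apply,
      Matrix.conjTranspose_apply, hc]
    exact Finset.sum_congr rfl fun _ _ => mul_comm _ _
  set s : Set (Fin n) := {i | μ i ≠ 0} with hs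
  set w : Fin n → EuclideanSpace ℂ (Fin n) := fun i => ((d i : ℂ))⁻¹ • c i with hw
  have hortho : Orthonormal ℂ (s.restrict w) := by
    rw [orthonormal_iff_ite]
    rintro ⟨i, hi⟩ ⟨k, hk⟩
    simp only [Set.restrict_apply, hw]
    show inner ℂ (((d i : ℂ))⁻¹ • c i) (((d k : ℂ))⁻¹ • c k) = _
    rw [inner_smul_left, inner_smul_right, hinner, hYY]
    have hdi : (d i : ℂ) ≠ 0 := by
      simp only [ne_eq, Complex.ofReal_eq_zero]
      exact fun h => hi (by rw [← hd2 i, h]; ring)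
    have hdk : (d k : ℂ) ≠ 0 := by
      simp only [ne_eq, Complex.ofReal_eq_zero]
      exact fun h => hk (by rw [← hd2 k, h]; ring)
    rcases eq_or_ne i k with rfl | hik
    · rw [Matrix.diagonal_apply_eq]
      simp only [if_pos rfl]
      rw [starRingEnd_apply, star_inv₀, Complex.star_def, Complex.conj_ofReal]
      have : ((μ i : ℂ)) = (d i : ℂ) * (d i : ℂ) := by
        rw [← Complex.ofReal_mul]
        norm_cast
        rw [← hd2 i]; ring
      rw [this]
      field_simp
      simp
    · rw [Matrix.diagonal_apply_ne _ hik]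
      simp [Subtype.ext_iff, hik]
  obtain ⟨b, hb⟩ := hortho.exists_orthonormalBasis_extension_of_card_eq
    (by rw [finrank_euclideanSpace_fin, Fintype.card_fin])
  set U₀ : Matrix (Fin n) (Fin n) ℂ := Matrix.of (fun j i => b i j) with hU₀
  have hU₀mem : U₀ ∈ Matrix.unitaryGroup (Fin n) ℂ := by
    rw [Matrix.mem_unitaryGroup_iff']
    ext i k
    have hbo := b.orthonormal
    rw [orthonormal_iff_ite] at hbo
    have := hbo i k
    simp only [PiLp.inner_apply, RCLike.inner_apply] at this
    simp only [Matrix.mul_apply, Matrix.star_apply, Matrix.conjTranspose_apply, hU₀,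
      Matrix.of_apply, Matrix.one_apply]
    rw [← this]
    congr 1
    funext j; exact mul_comm _ _
  have hcol : Y = U₀ * Matrix.diagonal (fun i => (d i : ℂ)) := by
    ext j i
    rw [Matrix.mul_apply]
    rw [Finset.sum_eq_single i]
    · rw [Matrix.diagonal_apply_eq]
      by_cases hi : μ i = 0
      · -- column is zero
        have hdiag : (Yᴴ * Y) i i = (0 : ℂ) := by rw [hYY, Matrix.diagonal_apply_eq, hi]; simp
        have hsum : ∑ j', Complex.normSq (Y j' i) = 0 := by
          have : (Yᴴ * Y) i i = ((∑ j', Complex.normSq (Y j' i) : ℝ) : ℂ) := by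
            rw [Matrix.mul_apply]
            push_cast
            congr 1
            funext j'
            rw [Matrix.conjTranspose_apply, Complex.star_def, ← Complex.normSq_eq_conj_mul_self]
          rw [hdiag] at this
          exact_mod_cast this.symm
        have hzero : Y j i = 0 := by
          have := (Finset.sum_eq_zero_iff_of_nonneg
            (fun j' _ => Complex.normSq_nonneg (Y j' i))).mp hsum j (Finset.mem_univ j)
          exact Complex.normSq_eq_zero.mp this
        have hdi : d i = 0 := by rw [hd]; simp [hi]
        rw [hzero, hdi]
        simp
      · have hbi : b i = w i := hb i hi
        have hdi : (d i : ℂ) ≠ 0 := by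
          simp only [ne_eq, Complex.ofReal_eq_zero]
          exact fun h => hi (by rw [← hd2 i, h]; ring)
        have : U₀ j i = ((d i : ℂ))⁻¹ * Y j i := by
          rw [hU₀, Matrix.of_apply, hbi, hw]
          rfl
        rw [this]
        field_simp
    · intro k _ hk
      rw [Matrix.diagonal_apply_ne _ hk, mul_zero]
    · intro h
      exact absurd (Finset.mem_univ i) h
  have hKeq : K = U₀ * Matrix.diagonal (fun i => (d i : ℂ)) * star (V : Matrix (Fin n) (Fin n) ℂ) := by
    rw [← hcol, hY, Matrix.mul_assoc, hVV', Matrix.mul_one]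
  -- matAbs
  set M : Matrix (Fin n) (Fin n) ℂ := (V : Matrix (Fin n) (Fin n) ℂ) *
    Matrix.diagonal (fun i => (d i : ℂ)) * star (V : Matrix (Fin n) (Fin n) ℂ) with hM
  have hMpsd : M.PosSemidef := by
    have hdiagpsd : (Matrix.diagonal (fun i => (d i : ℂ))).PosSemidef := by
      rw [Matrix.posSemidef_diagonal_iff]
      intro i
      rw [Complex.zero_le_real]
      exact hd0 i
    have h3 := hdiagpsd.mul_mul_conjTranspose_same (V : Matrix (Fin n) (Fin n) ℂ)
    rw [hM]
    rwa [← Matrix.star_eq_conjTranspose] at h3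
  have hMsq : M ^ 2 = Kᴴ * K := by
    rw [pow_two, hM]
    calc ((V : Matrix (Fin n) (Fin n) ℂ) * Matrix.diagonal (fun i => (d i : ℂ)) *
          star (V : Matrix (Fin n) (Fin n) ℂ)) *
        ((V : Matrix (Fin n) (Fin n) ℂ) * Matrix.diagonal (fun i => (d i : ℂ)) *
          star (V : Matrix (Fin n) (Fin n) ℂ))
        = (V : Matrix (Fin n) (Fin n) ℂ) * (Matrix.diagonal (fun i => (d i : ℂ)) *
            ((star (V : Matrix (Fin n) (Fin n) ℂ) * (V : Matrix (Fin n) (Fin n) ℂ)) *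
              (Matrix.diagonal (fun i => (d i : ℂ)) * star (V : Matrix (Fin n) (Fin n) ℂ)))) := by
          simp only [Matrix.mul_assoc]
      _ = (V : Matrix (Fin n) (Fin n) ℂ) * Matrix.diagonal (fun i => (μ i : ℂ)) *
            star (V : Matrix (Fin n) (Fin n) ℂ) := by
          have hfun : (fun i => (d i : ℂ) * (d i : ℂ)) = fun i => (μ i : ℂ) := by
            funext i
            rw [← Complex.ofReal_mul]
            norm_cast
            rw [← hd2 i]; ring
          rw [hVV, Matrix.one_mul,
            ← Matrix.mul_assoc (Matrix.diagonal fun i => ((d i : ℂ)))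
              (Matrix.diagonal fun i => ((d i : ℂ))) (star (V : Matrix (Fin n) (Fin n) ℂ)),
            Matrix.diagonal_mul_diagonal, hfun]
          simp only [Matrix.mul_assoc]
      _ = Kᴴ * K := hspec.symm
  have hMabs : matAbs K = M := by
    rfl
  exact ⟨⟨U₀, hU₀mem⟩, V, d, hd0, hd2, hKeq, by rw [hMabs, hM]⟩

end SVD

lemma matAbs_psd {n : ℕ} (Z : Matrix (Fin n) (Fin n) ℂ) : (matAbs Z).PosSemidef := by
  obtain ⟨U, V, d, hd0, -, -, hAbs⟩ := exists_svd Z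
  rw [hAbs]
  have hdiagpsd : (Matrix.diagonal (fun i => (d i : ℂ))).PosSemidef := by
    rw [Matrix.posSemidef_diagonal_iff]
    intro i
    rw [Complex.zero_le_real]
    exact hd0 i
  have h3 := hdiagpsd.mul_mul_conjTranspose_same (V : Matrix (Fin n) (Fin n) ℂ)
  rwa [← Matrix.star_eq_conjTranspose] at h3



lemma eigs_le_one {n : ℕ} {K : Matrix (Fin n) (Fin n) ℂ} (hc : (1 - Kᴴ * K).PosSemidef) (i : Fin n) :
    (Matrix.posSemidef_conjTranspose_mul_self K).1.eigenvalues i ≤ 1 := by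
  set h1 : (Kᴴ * K).IsHermitian := (Matrix.posSemidef_conjTranspose_mul_self K).1 with hh1
  set v : EuclideanSpace ℂ (Fin n) := h1.eigenvectorBasis i with hv
  have hmv : (Kᴴ * K) *ᵥ ⇑v = h1.eigenvalues i • ⇑v := h1.mulVec_eigenvectorBasis i
  have hnorm : dotProduct (star (⇑v : Fin n → ℂ)) ⇑v = 1 := by
    have := (h1.eigenvectorBasis.orthonormal).1 i
    rw [dotProduct_comm]
    rw [← EuclideanSpace.inner_eq_star_dotProduct]
    rw [@norm_eq_sqrt_re_inner ℂ] at this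
    have h2 : (Real.sqrt (RCLike.re (inner (𝕜 := ℂ) v v))) ^ 2 = 1 := by rw [this]; norm_num
    rw [Real.sq_sqrt inner_self_nonneg] at h2
    have h3 := inner_self_im (𝕜 := ℂ) v
    apply Complex.ext
    · simpa using h2
    · simpa using h3
  have h0 := hc.dotProduct_mulVec_nonneg ⇑v
  rw [Matrix.sub_mulVec, Matrix.one_mulVec, hmv, dotProduct_sub,
    dotProduct_smul, hnorm] at h0
  have e : h1.eigenvalues i • (1 : ℂ) = ((h1.eigenvalues i : ℝ) : ℂ) := by
    rw [Complex.real_smul, mul_one]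
  rw [e] at h0
  have : (0 : ℂ) ≤ 1 - (h1.eigenvalues i : ℂ) := h0
  rw [show (1 : ℂ) - (h1.eigenvalues i : ℂ) = ((1 - h1.eigenvalues i : ℝ) : ℂ) by push_cast; ring,
    Complex.zero_le_real] at this
  linarith

lemma contraction_avg {n : ℕ} {K : Matrix (Fin n) (Fin n) ℂ} (hc : (1 - Kᴴ * K).PosSemidef) :
    ∃ U W : Matrix.unitaryGroup (Fin n) ℂ,
      K = ((1 : ℂ)/2) • ((U : Matrix (Fin n) (Fin n) ℂ) + (W : Matrix (Fin n) (Fin n) ℂ)) := by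
  obtain ⟨U, V, d, hd0, hd2, hKeq, -⟩ := exists_svd K
  have hd1 : ∀ i, ‖((d i : ℂ))‖ ≤ 1 := by
    intro i
    rw [Complex.norm_real, Real.norm_eq_abs, abs_of_nonneg (hd0 i)]
    nlinarith [hd2 i, eigs_le_one hc i, hd0 i]
  choose u w hu hw hz using fun i => avg_unimodular ((d i : ℂ)) (hd1 i)
  have hdiag : Matrix.diagonal (fun i => (d i : ℂ)) =
      ((1 : ℂ)/2) • (Matrix.diagonal u + Matrix.diagonal w) := by
    ext i j
    rcases eq_or_ne i j with rfl | hij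
    · simp only [Matrix.diagonal_apply_eq, Matrix.smul_apply, Matrix.add_apply, hz i]
      rw [smul_eq_mul]; ring
    · simp [Matrix.diagonal_apply_ne _ hij]
  refine ⟨U * ⟨_, diagonal_unimodular_mem hu⟩ * star V,
    U * ⟨_, diagonal_unimodular_mem hw⟩ * star V, ?_⟩
  have hcoe1 : ((U * ⟨_, diagonal_unimodular_mem hu⟩ * star V :
      Matrix.unitaryGroup (Fin n) ℂ) : Matrix (Fin n) (Fin n) ℂ) =
      (U : Matrix (Fin n) (Fin n) ℂ) * Matrix.diagonal u * star (V : Matrix (Fin n) (Fin n) ℂ) := rfl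
  have hcoe2 : ((U * ⟨_, diagonal_unimodular_mem hw⟩ * star V :
      Matrix.unitaryGroup (Fin n) ℂ) : Matrix (Fin n) (Fin n) ℂ) =
      (U : Matrix (Fin n) (Fin n) ℂ) * Matrix.diagonal w * star (V : Matrix (Fin n) (Fin n) ℂ) := rfl
  rw [hcoe1, hcoe2, hKeq, hdiag]
  rw [Matrix.mul_smul, Matrix.smul_mul, Matrix.mul_add, Matrix.add_mul]


section MonoPSD
variable {n : ℕ} {N : Matrix (Fin n) (Fin n) ℂ → ℝ}

lemma psd_add {P Q : Matrix (Fin n) (Fin n) ℂ} (hP : P.PosSemidef) (hQ : Q.PosSemidef) :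
    (P + Q).PosSemidef :=
  hP.add hQ

lemma psd_sqrt_exists {Q : Matrix (Fin n) (Fin n) ℂ} (hQ : Q.PosSemidef) :
    ∃ S : Matrix (Fin n) (Fin n) ℂ, Sᴴ = S ∧ S * S = Q := by
  set U : Matrix (Fin n) (Fin n) ℂ := (hQ.1.eigenvectorUnitary : Matrix (Fin n) (Fin n) ℂ) with hU
  have hUU : star U * U = 1 := Unitary.coe_star_mul_self _
  have hspec : Q = U * Matrix.diagonal (fun i => ((hQ.1.eigenvalues i : ℝ) : ℂ)) * star U := by
    have := hQ.1.spectral_theorem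
    rw [Unitary.conjStarAlgAut_apply] at this
    exact this
  refine ⟨U * Matrix.diagonal (fun i => ((Real.sqrt (hQ.1.eigenvalues i) : ℝ) : ℂ)) * star U, ?_, ?_⟩
  · simp [Matrix.conjTranspose_mul, Matrix.star_eq_conjTranspose, Matrix.mul_assoc,
      Matrix.diagonal_conjTranspose]
    rw [show (star fun i => ((Real.sqrt (hQ.1.eigenvalues i) : ℝ) : ℂ)) =
      fun i => ((Real.sqrt (hQ.1.eigenvalues i) : ℝ) : ℂ) from funext fun i => by simp]
  · conv_rhs => rw [hspec]
    simp only [Matrix.mul_assoc]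
    rw [← Matrix.mul_assoc (star U) U, hUU, Matrix.one_mul,
      ← Matrix.mul_assoc (Matrix.diagonal _) (Matrix.diagonal _), Matrix.diagonal_mul_diagonal]
    have hf : (fun i => ((Real.sqrt (hQ.1.eigenvalues i) : ℝ) : ℂ) *
        ((Real.sqrt (hQ.1.eigenvalues i) : ℝ) : ℂ)) = fun i => ((hQ.1.eigenvalues i : ℝ) : ℂ) := by
      funext i
      rw [← Complex.ofReal_mul, Real.mul_self_sqrt (hQ.eigenvalues_nonneg i)]
    rw [hf]

set_option maxHeartbeats 1000000 in
lemma N_mono_psd_aux (hN : IsUnitarilyInvariantNorm N) {P Q : Matrix (Fin n) (Fin n) ℂ}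
    (hP : P.PosSemidef) (hQ : Q.PosSemidef) {ε : ℝ} (hε : 0 < ε) :
    N Q ≤ N (P + Q) + ε * N 1 := by
  set R := P + Q with hRdef
  have hRpsd : R.PosSemidef := psd_add hP hQ
  set h1 : R.IsHermitian := hRpsd.1 with hh1
  set W : Matrix (Fin n) (Fin n) ℂ := (h1.eigenvectorUnitary : Matrix (Fin n) (Fin n) ℂ) with hW
  have hWmem : W ∈ Matrix.unitaryGroup (Fin n) ℂ := h1.eigenvectorUnitary.2
  set ρ : Fin n → ℝ := h1.eigenvalues with hρ
  have hρ0 : ∀ i, 0 ≤ ρ i := fun i => hRpsd.eigenvalues_nonneg i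
  set a : Fin n → ℝ := fun i => Real.sqrt (ρ i + ε) with ha
  have ha0 : ∀ i, 0 < a i := fun i => Real.sqrt_pos.mpr (by have := hρ0 i; linarith)
  have ha2 : ∀ i, a i ^ 2 = ρ i + ε := fun i => Real.sq_sqrt (by have := hρ0 i; linarith)
  have hWW : star W * W = 1 := Unitary.coe_star_mul_self h1.eigenvectorUnitary
  have hWW' : W * star W = 1 := Unitary.coe_mul_star_self h1.eigenvectorUnitary
  have hconj : ∀ (e e' : Fin n → ℂ), (W * Matrix.diagonal e * star W) *
      (W * Matrix.diagonal e' * star W) =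
      W * Matrix.diagonal (fun i => e i * e' i) * star W := by
    intro e e'
    calc (W * Matrix.diagonal e * star W) * (W * Matrix.diagonal e' * star W)
        = W * (Matrix.diagonal e * ((star W * W) * (Matrix.diagonal e' * star W))) := by
          simp only [Matrix.mul_assoc]
      _ = W * (Matrix.diagonal e * Matrix.diagonal e' * star W) := by
          rw [hWW, Matrix.one_mul, Matrix.mul_assoc]
      _ = W * Matrix.diagonal (fun i => e i * e' i) * star W := by
          rw [Matrix.diagonal_mul_diagonal]
          simp only [Matrix.mul_assoc]
  set S : Matrix (Fin n) (Fin n) ℂ := W * Matrix.diagonal (fun i => (a i : ℂ)) * star W with hS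
  set T : Matrix (Fin n) (Fin n) ℂ := W * Matrix.diagonal (fun i => ((a i)⁻¹ : ℂ)) * star W with hT
  have hST : S * T = 1 := by
    rw [hS, hT, hconj]
    have : (fun i => (a i : ℂ) * ((a i)⁻¹ : ℂ)) = fun _ => (1 : ℂ) := by
      funext i
      have h' : ((a i : ℝ) : ℂ) ≠ 0 := by exact_mod_cast (ha0 i).ne'
      push_cast
      field_simp
    rw [this, Matrix.diagonal_one, Matrix.mul_one, hWW']
  have hTS : T * S = 1 := by
    rw [hS, hT, hconj]
    have : (fun i => ((a i)⁻¹ : ℂ) * (a i : ℂ)) = fun _ => (1 : ℂ) := by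
      funext i
      have h' : ((a i : ℝ) : ℂ) ≠ 0 := by exact_mod_cast (ha0 i).ne'
      push_cast
      field_simp
    rw [this, Matrix.diagonal_one, Matrix.mul_one, hWW']
  have hdiagH : ∀ e : Fin n → ℂ, (∀ i, star (e i) = e i) →
      (W * Matrix.diagonal e * star W)ᴴ = W * Matrix.diagonal e * star W := by
    intro e he
    rw [Matrix.conjTranspose_mul, Matrix.conjTranspose_mul, Matrix.diagonal_conjTranspose]
    rw [show (star e) = e from funext he]
    simp only [← Matrix.star_eq_conjTranspose, star_star, Matrix.mul_assoc]
  have hSH : Sᴴ = S := hdiagH _ (fun i => by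
    simp [Complex.star_def, Complex.conj_ofReal])
  have hTH : Tᴴ = T := hdiagH _ (fun i => by
    simp [Complex.star_def, map_inv₀, Complex.conj_ofReal])
  have hSS : S * S = R + (ε : ℂ) • 1 := by
    rw [hS, hconj]
    have : (fun i => (a i : ℂ) * (a i : ℂ)) = fun i => ((ρ i : ℂ) + (ε : ℂ)) := by
      funext i
      rw [← Complex.ofReal_mul, ← Complex.ofReal_add]
      norm_cast
      rw [← ha2 i]; ring
    rw [this]
    have hdsplit : Matrix.diagonal (fun i => ((ρ i : ℂ) + (ε : ℂ))) =
        Matrix.diagonal (fun i => (ρ i : ℂ)) + (ε : ℂ) • 1 := by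
      rw [Matrix.smul_one_eq_diagonal, ← Matrix.diagonal_add]
    rw [hdsplit, Matrix.mul_add, Matrix.add_mul]
    have e1 : W * Matrix.diagonal (fun i => (ρ i : ℂ)) * star W = R := h1.spectral_theorem.symm
    have e2 : W * ((ε : ℂ) • (1 : Matrix (Fin n) (Fin n) ℂ)) * star W =
        (ε : ℂ) • (1 : Matrix (Fin n) (Fin n) ℂ) := by
      rw [Matrix.mul_smul, Matrix.mul_one, Matrix.smul_mul, hWW']
    rw [e1, e2]
  -- the contraction
  obtain ⟨Qs, hsqrtH, hQsq⟩ := psd_sqrt_exists hQ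
  set K : Matrix (Fin n) (Fin n) ℂ := Qs * T with hK
  have hKS : K * S = Qs := by rw [hK, Matrix.mul_assoc, hTS, Matrix.mul_one]
  have hQeq : Q = K * (R + (ε : ℂ) • 1) * Kᴴ := by
    have h2 : Q = (K * S) * (K * S)ᴴ := by
      rw [hKS, hsqrtH, hQsq]
    rw [h2, Matrix.conjTranspose_mul, hSH, ← hSS]
    simp only [Matrix.mul_assoc]
  have hKK : Kᴴ * K = T * Q * T := by
    rw [hK, Matrix.conjTranspose_mul, hTH, hsqrtH]
    calc T * Qs * (Qs * T) = T * (Qs * Qs) * T := by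
          simp only [Matrix.mul_assoc]
      _ = T * Q * T := by rw [hQsq]
  have hone : (1 : Matrix (Fin n) (Fin n) ℂ) = T * (S * S) * T := by
    calc (1 : Matrix (Fin n) (Fin n) ℂ) = (T * S) * (S * T) := by rw [hTS, hST, Matrix.one_mul]
      _ = T * (S * S) * T := by simp only [Matrix.mul_assoc]
  have hcontr : (1 - Kᴴ * K).PosSemidef := by
    have hPe : (P + (ε : ℂ) • 1).PosSemidef := by
      refine psd_add hP ?_
      rw [Matrix.smul_one_eq_diagonal]
      rw [Matrix.posSemidef_diagonal_iff]
      intro i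
      rw [Complex.zero_le_real]
      exact hε.le
    have h5 : (P + (ε : ℂ) • 1) + Q = R + (ε : ℂ) • (1 : Matrix (Fin n) (Fin n) ℂ) := by
      rw [hRdef]; abel
    have h4 : T * ((P + (ε : ℂ) • 1) + Q) * T =
        T * (P + (ε : ℂ) • 1) * T + T * Q * T := by
      rw [Matrix.mul_add, Matrix.add_mul]
    have h3 : T * (P + (ε : ℂ) • 1) * T + T * Q * T = 1 := by
      rw [← h4, h5, ← hSS, ← hone]
    have heq : 1 - Kᴴ * K = T * (P + (ε : ℂ) • 1) * Tᴴ := by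
      rw [hTH, hKK]
      exact (eq_sub_of_add_eq h3).symm
    rw [heq]
    exact hPe.mul_mul_conjTranspose_same T
  obtain ⟨U1, U2, hKdec⟩ := contraction_avg hcontr
  -- expand
  set Rε : Matrix (Fin n) (Fin n) ℂ := R + (ε : ℂ) • 1 with hRε
  set A1 : Matrix (Fin n) (Fin n) ℂ := (U1 : Matrix (Fin n) (Fin n) ℂ) with hA1
  set A2 : Matrix (Fin n) (Fin n) ℂ := (U2 : Matrix (Fin n) (Fin n) ℂ) with hA2
  have hexp : K * Rε * Kᴴ = ((1 : ℂ)/2 * star ((1 : ℂ)/2)) •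
      ((A1 * Rε * (A1ᴴ + A2ᴴ)) + (A2 * Rε * (A1ᴴ + A2ᴴ))) := by
    rw [hKdec, Matrix.conjTranspose_smul, Matrix.conjTranspose_add]
    rw [Matrix.smul_mul, Matrix.smul_mul, Matrix.mul_smul, smul_smul]
    rw [Matrix.add_mul, Matrix.add_mul]
  have hscal : ((1 : ℂ)/2 * star ((1 : ℂ)/2)) = (1 : ℂ)/4 := by
    norm_num
  have hNunit : ∀ (X Y : Matrix.unitaryGroup (Fin n) ℂ),
      N ((X : Matrix (Fin n) (Fin n) ℂ) * Rε * (Y : Matrix (Fin n) (Fin n) ℂ)ᴴ) = N Rε := by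
    intro X Y
    have := hN.2.2.2 X (star Y) Rε
    rwa [Unitary.coe_star, Matrix.star_eq_conjTranspose] at this
  have hNQ : N Q ≤ N Rε := by
    have hQ2 : Q = K * Rε * Kᴴ := hQeq
    rw [hQ2, hexp, hscal, hN.2.1]
    have hnorm14 : ‖((1 : ℂ)/4)‖ = 1/4 := by norm_num
    rw [hnorm14]
    have t1 : N (A1 * Rε * (A1ᴴ + A2ᴴ)) ≤ 2 * N Rε := by
      rw [Matrix.mul_add]
      have := hN.2.2.1 (A1 * Rε * A1ᴴ) (A1 * Rε * A2ᴴ)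
      rw [hNunit U1 U1, hNunit U1 U2] at this
      linarith
    have t2 : N (A2 * Rε * (A1ᴴ + A2ᴴ)) ≤ 2 * N Rε := by
      rw [Matrix.mul_add]
      have := hN.2.2.1 (A2 * Rε * A1ᴴ) (A2 * Rε * A2ᴴ)
      rw [hNunit U2 U1, hNunit U2 U2] at this
      linarith
    have t3 := hN.2.2.1 (A1 * Rε * (A1ᴴ + A2ᴴ)) (A2 * Rε * (A1ᴴ + A2ᴴ))
    have hRεnn : 0 ≤ N Rε := N_nonneg hN Rε
    nlinarith
  have hstep : N Rε ≤ N R + ε * N 1 := by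
    have h6 := hN.2.2.1 R ((ε : ℂ) • 1)
    have h7 : N ((ε : ℂ) • (1 : Matrix (Fin n) (Fin n) ℂ)) = ε * N 1 := by
      rw [hN.2.1]
      congr 1
      rw [Complex.norm_real, Real.norm_eq_abs, abs_of_pos hε]
    rw [h7] at h6
    exact h6
  linarith

lemma N_mono_psd (hN : IsUnitarilyInvariantNorm N) {P Q : Matrix (Fin n) (Fin n) ℂ}
    (hP : P.PosSemidef) (hQ : Q.PosSemidef) : N Q ≤ N (P + Q) := by
  refine le_of_forall_pos_le_add fun ε hε => ?_
  have h1 : 0 ≤ N 1 := N_nonneg hN 1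
  have h2 := N_mono_psd_aux hN hP hQ (ε := ε / (N 1 + 1)) (by positivity)
  have h3 : ε / (N 1 + 1) * N 1 ≤ ε := by
    rw [div_mul_eq_mul_div, div_le_iff₀ (by linarith)]
    nlinarith
  linarith

lemma N_matAbs (hN : IsUnitarilyInvariantNorm N) (X : Matrix (Fin n) (Fin n) ℂ) :
    N (matAbs X) = N X := by
  obtain ⟨U, V, d, -, -, hX, hAbs⟩ := exists_svd X
  have h1 : N X = N (Matrix.diagonal fun i => (d i : ℂ)) := by
    rw [hX]
    have := hN.2.2.2 U (star V) (Matrix.diagonal fun i => (d i : ℂ))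
    rwa [Unitary.coe_star] at this
  have h2 : N (matAbs X) = N (Matrix.diagonal fun i => (d i : ℂ)) := by
    rw [hAbs]
    have := hN.2.2.2 V (star V) (Matrix.diagonal fun i => (d i : ℂ))
    rwa [Unitary.coe_star] at this
  rw [h1, h2]

lemma memH_bound {f : ℂ → ℂ} (hf : MemH f) {x : ℝ} (hx : |x| < 1) :
    ‖f x‖ ≤ (1 + |x|) / (1 - |x|) := by
  obtain ⟨hdiff, hre, hf0⟩ := hf
  set ω : ℂ → ℂ := fun z => (f z - 1) / (f z + 1) with hω
  have hne : ∀ z ∈ Metric.ball (0 : ℂ) 1, f z + 1 ≠ 0 := by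
    intro z hz h
    have h1 := hre z hz
    have h2 : (f z).re + 1 = 0 := by
      have := congrArg Complex.re h
      simpa using this
    linarith
  have hωdiff : DifferentiableOn ℂ ω (Metric.ball 0 1) :=
    DifferentiableOn.div (hdiff.sub (differentiableOn_const 1))
      (hdiff.add (differentiableOn_const 1)) hne
  have hlt : ∀ z ∈ Metric.ball (0 : ℂ) 1, ‖f z - 1‖ < ‖f z + 1‖ := by
    intro z hz
    have h1 := hre z hz
    have e1 : ‖f z - 1‖ ^ 2 = ((f z).re - 1) ^ 2 + (f z).im ^ 2 := by
      rw [Complex.sq_norm, Complex.normSq_apply]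
      simp only [Complex.sub_re, Complex.sub_im, Complex.one_re, Complex.one_im]
      ring
    have e2 : ‖f z + 1‖ ^ 2 = ((f z).re + 1) ^ 2 + (f z).im ^ 2 := by
      rw [Complex.sq_norm, Complex.normSq_apply]
      simp only [Complex.add_re, Complex.add_im, Complex.one_re, Complex.one_im]
      ring
    nlinarith [norm_nonneg (f z - 1), norm_nonneg (f z + 1)]
  have hmaps : Set.MapsTo ω (Metric.ball 0 1) (Metric.ball 0 1) := by
    intro z hz
    have h2 := hlt z hz
    have h3 : (0:ℝ) < ‖f z + 1‖ := lt_of_le_of_lt (norm_nonneg _) h2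
    rw [Metric.mem_ball, dist_zero_right]
    have h4 : ‖ω z‖ = ‖f z - 1‖ / ‖f z + 1‖ := by
      show ‖(f z - 1) / (f z + 1)‖ = _
      exact norm_div _ _
    rw [h4, div_lt_one h3]
    exact h2
  have hω0 : ω 0 = 0 := by simp [hω, hf0]
  have hsch : ‖ω x‖ ≤ ‖(x : ℂ)‖ := by
    apply Complex.norm_le_norm_of_mapsTo_ball hωdiff (hmaps.mono_right Metric.ball_subset_closedBall) hω0
    simpa using hx
  have habsx : ‖(x : ℂ)‖ = |x| := by
    rw [Complex.norm_real, Real.norm_eq_abs]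
  -- recover f
  have hball : (x : ℂ) ∈ Metric.ball (0 : ℂ) 1 := by
    simp only [Metric.mem_ball, dist_zero_right, Complex.norm_real, Real.norm_eq_abs]
    exact hx
  have hnex := hne _ hball
  have hω1 : ‖ω x‖ < 1 := by
    exact lt_of_le_of_lt (by rwa [habsx] at hsch) hx
  have hfx : f x = (1 + ω x) / (1 - ω x) := by
    have hden : (1 : ℂ) - ω x ≠ 0 := by
      intro h
      have : ‖(1 : ℂ) - ω x‖ = 0 := by rw [h, norm_zero]
      have h1 : ‖(1:ℂ)‖ - ‖ω x‖ ≤ ‖(1:ℂ) - ω x‖ := norm_sub_norm_le _ _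
      rw [norm_one] at h1
      linarith
    rw [hω]
    field_simp
    ring
  rw [hfx, norm_div]
  have hden2 : (0:ℝ) < 1 - ‖ω x‖ := by linarith
  have hnum : ‖1 + ω x‖ ≤ 1 + ‖ω x‖ := by
    calc ‖1 + ω x‖ ≤ ‖(1:ℂ)‖ + ‖ω x‖ := norm_add_le _ _
      _ = 1 + ‖ω x‖ := by rw [norm_one]
  have hden3 : 1 - ‖ω x‖ ≤ ‖1 - ω x‖ := by
    have := norm_sub_norm_le (1 : ℂ) (ω x)
    rwa [norm_one] at this
  have hd0 : (0:ℝ) < ‖1 - ω x‖ := lt_of_lt_of_le hden2 hden3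
  have hωx : ‖ω x‖ ≤ |x| := by rwa [habsx] at hsch
  have h1x : (0:ℝ) < 1 - |x| := by linarith
  calc ‖1 + ω x‖ / ‖1 - ω x‖ ≤ (1 + ‖ω x‖) / (1 - ‖ω x‖) :=
        div_le_div₀ (by positivity) hnum hden2 hden3
    _ ≤ (1 + |x|) / (1 - |x|) :=
        div_le_div₀ (by positivity) (by linarith) h1x (by linarith)



end MonoPSD

/-- **Proposition 3.2 (first inequality), Hermitian matrix case.** -/
theorem stmt11 {n : ℕ} (hn : 1 ≤ n)
    {A B : Matrix (Fin n) (Fin n) ℂ} (hA : A.IsHermitian) (hB : B.IsHermitian)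
    (hAspec : ∀ i, |hA.eigenvalues i| < 1) (hBspec : ∀ i, |hB.eigenvalues i| < 1)
    {f g : ℂ → ℂ} (hf : MemH f) (hg : MemH g)
    (X : Matrix (Fin n) (Fin n) ℂ)
    (N : Matrix (Fin n) (Fin n) ℂ → ℝ) (hN : IsUnitarilyInvariantNorm N) :
    N (herFun hA f * X + herFun hA f * X * herFun hB g + X * herFun hB g) ≤
      (Real.sqrt 2 / (dDist hA * dDist hB)) *
        (N (matAbs (A * X * B) + matAbs X) + N (matAbs (X * B) + matAbs X) +
          N (matAbs (A * X) + matAbs X)) := by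
  haveI : Nonempty (Fin n) := Fin.pos_iff_nonempty.mp hn
  -- distance facts
  have dfacts : ∀ {C : Matrix (Fin n) (Fin n) ℂ} (hC : C.IsHermitian),
      (∀ i, |hC.eigenvalues i| < 1) →
      (∀ i, dDist hC ≤ 1 - |hC.eigenvalues i|) ∧ 0 < dDist hC ∧ dDist hC ≤ 1 := by
    intro C hC hCspec
    have bdd : BddBelow (Set.range fun i => 1 - |hC.eigenvalues i|) :=
      (Set.finite_range _).bddBelow
    have hle : ∀ i, dDist hC ≤ 1 - |hC.eigenvalues i| := fun i => ciInf_le bdd i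
    obtain ⟨i0, hi0⟩ := Finite.exists_min (fun i => 1 - |hC.eigenvalues i|)
    have heq : dDist hC = 1 - |hC.eigenvalues i0| := le_antisymm (hle i0) (le_ciInf hi0)
    refine ⟨hle, ?_, ?_⟩
    · rw [heq]; linarith [hCspec i0]
    · rw [heq]; linarith [abs_nonneg (hC.eigenvalues i0)]
  obtain ⟨hdAle, hdApos, hdA1⟩ := dfacts hA hAspec
  obtain ⟨hdBle, hdBpos, hdB1⟩ := dfacts hB hBspec
  -- eigenvalue bounds
  have hbound : ∀ {C : Matrix (Fin n) (Fin n) ℂ} (hC : C.IsHermitian)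
      (_ : ∀ i, |hC.eigenvalues i| < 1) (_ : ∀ i, dDist hC ≤ 1 - |hC.eigenvalues i|)
      (_ : 0 < dDist hC) {φ : ℂ → ℂ}, MemH φ →
      ∀ i, ‖φ (hC.eigenvalues i : ℂ)‖ ≤ 2 / dDist hC - 1 := by
    intro C hC hCspec hCle hCpos φ hφ i
    have h1 := memH_bound hφ (hCspec i)
    refine h1.trans ?_
    have ht0 : 0 ≤ |hC.eigenvalues i| := abs_nonneg _
    have ht1 : |hC.eigenvalues i| < 1 := hCspec i
    have h3 : dDist hC ≤ 1 - |hC.eigenvalues i| := hCle i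
    rw [div_le_iff₀ (by linarith)]
    have h4 : 2 / (1 - |hC.eigenvalues i|) ≤ 2 / dDist hC :=
      div_le_div_of_nonneg_left (by norm_num) hCpos h3
    have h5 : (2 / (1 - |hC.eigenvalues i|) - 1) * (1 - |hC.eigenvalues i|) =
        1 + |hC.eigenvalues i| := by
      have hne : (1 - |hC.eigenvalues i|) ≠ 0 := by linarith
      field_simp
      ring
    nlinarith
  have hfb := hbound hA hAspec hdAle hdApos hf
  have hgb := hbound hB hBspec hdBle hdBpos hg
  have ha0 : (0:ℝ) ≤ 2 / dDist hA - 1 := by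
    have : (1:ℝ) ≤ 2 / dDist hA := by
      rw [le_div_iff₀ hdApos]; linarith
    linarith
  have hb0 : (0:ℝ) ≤ 2 / dDist hB - 1 := by
    have : (1:ℝ) ≤ 2 / dDist hB := by
      rw [le_div_iff₀ hdBpos]; linarith
    linarith
  -- herFun unfolding
  have hFA : herFun hA f = (hA.eigenvectorUnitary : Matrix (Fin n) (Fin n) ℂ) *
      Matrix.diagonal (fun i => f (hA.eigenvalues i : ℂ)) *
      star (hA.eigenvectorUnitary : Matrix (Fin n) (Fin n) ℂ) := rfl
  have hGB : herFun hB g = (hB.eigenvectorUnitary : Matrix (Fin n) (Fin n) ℂ) *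
      Matrix.diagonal (fun i => g (hB.eigenvalues i : ℂ)) *
      star (hB.eigenvectorUnitary : Matrix (Fin n) (Fin n) ℂ) := rfl
  have n1 : N (herFun hA f * X) ≤ (2 / dDist hA - 1) * N X := by
    rw [hFA]; exact N_conj_diag_mul_le hN _ ha0 hfb X
  have n3 : N (X * herFun hB g) ≤ (2 / dDist hB - 1) * N X := by
    rw [hGB]; exact N_mul_conj_diag_le hN _ hb0 hgb X
  have n2 : N (herFun hA f * X * herFun hB g) ≤
      (2 / dDist hB - 1) * ((2 / dDist hA - 1) * N X) := by
    have s1 : N (herFun hA f * X * herFun hB g) ≤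
        (2 / dDist hB - 1) * N (herFun hA f * X) := by
      rw [hGB]; exact N_mul_conj_diag_le hN _ hb0 hgb _
    refine s1.trans ?_
    exact mul_le_mul_of_nonneg_left n1 hb0
  have tri : N (herFun hA f * X + herFun hA f * X * herFun hB g + X * herFun hB g) ≤
      N (herFun hA f * X) + N (herFun hA f * X * herFun hB g) + N (X * herFun hB g) := by
    have t1 := hN.2.2.1 (herFun hA f * X + herFun hA f * X * herFun hB g) (X * herFun hB g)
    have t2 := hN.2.2.1 (herFun hA f * X) (herFun hA f * X * herFun hB g)
    linarith
  have hNX : 0 ≤ N X := N_nonneg hN X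
  -- RHS terms
  have habs : ∀ Z : Matrix (Fin n) (Fin n) ℂ, (matAbs Z).PosSemidef := fun Z =>
    matAbs_psd Z
  have hterm : ∀ Z : Matrix (Fin n) (Fin n) ℂ, N X ≤ N (matAbs Z + matAbs X) := by
    intro Z
    have := N_mono_psd hN (habs Z) (habs X)
    rwa [N_matAbs hN X] at this
  -- scalar inequality
  have hs : Real.sqrt 2 * Real.sqrt 2 = 2 := Real.mul_self_sqrt (by norm_num)
  have h42 : (4:ℝ) ≤ 3 * Real.sqrt 2 := by nlinarith [Real.sqrt_nonneg 2]
  have hdd : 0 < dDist hA * dDist hB := mul_pos hdApos hdBpos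
  have key : ((2 / dDist hA - 1) + (2 / dDist hB - 1) * (2 / dDist hA - 1) +
      (2 / dDist hB - 1)) * N X ≤
      (Real.sqrt 2 / (dDist hA * dDist hB)) * (3 * N X) := by
    have hcoef : (2 / dDist hA - 1) + (2 / dDist hB - 1) * (2 / dDist hA - 1) +
        (2 / dDist hB - 1) ≤ Real.sqrt 2 / (dDist hA * dDist hB) * 3 := by
      have e1 : (2 / dDist hA - 1) + (2 / dDist hB - 1) * (2 / dDist hA - 1) +
          (2 / dDist hB - 1) = 4 / (dDist hA * dDist hB) - 1 := by
        field_simp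
        ring
      rw [e1]
      rw [div_sub' hdd.ne', div_mul_eq_mul_div, div_le_div_iff₀ hdd hdd]
      have : dDist hA * dDist hB ≤ 1 := by nlinarith
      nlinarith
    nlinarith [hcoef, hNX, mul_le_mul_of_nonneg_right hcoef hNX]
  have sumterms : 3 * N X ≤ N (matAbs (A * X * B) + matAbs X) +
      N (matAbs (X * B) + matAbs X) + N (matAbs (A * X) + matAbs X) := by
    have := hterm (A * X * B)
    have := hterm (X * B)
    have := hterm (A * X)
    linarith
  have hscale : 0 ≤ Real.sqrt 2 / (dDist hA * dDist hB) := by positivity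
  calc N (herFun hA f * X + herFun hA f * X * herFun hB g + X * herFun hB g)
      ≤ N (herFun hA f * X) + N (herFun hA f * X * herFun hB g) + N (X * herFun hB g) := tri
    _ ≤ ((2 / dDist hA - 1) + (2 / dDist hB - 1) * (2 / dDist hA - 1) +
        (2 / dDist hB - 1)) * N X := by nlinarith [n1, n2, n3]
    _ ≤ (Real.sqrt 2 / (dDist hA * dDist hB)) * (3 * N X) := key
    _ ≤ (Real.sqrt 2 / (dDist hA * dDist hB)) *
        (N (matAbs (A * X * B) + matAbs X) + N (matAbs (X * B) + matAbs X) +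
          N (matAbs (A * X) + matAbs X)) := mul_le_mul_of_nonneg_left sumterms hscale
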